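/- Fix a real number γ and an integer ℓ ≥ 1. Let r₁,…,r_ℓ and s₁,…,s_ℓ be points in ℝ² and let y₁,…,y_ℓ and w₁,…,w_ℓ be real numbers (dual values for the requests r_k and servers s_k) satisfying: (i) y_k + w_k ≤ γ·D(r_k, s_k) for every 1 ≤ k ≤ ℓ; (ii) w_k + y_{k+1} = D(s_k, r_{k+1}) for every 1 ≤ k ≤ ℓ−1; (iii) y₁ = 0 and w_ℓ = 0. Then the γ-net-cost of the path r₁ s₁ r₂ s₂ ⋯ r_ℓ s_ℓ is nonnegative: γ·Σ_{k=1}^{ℓ} D(r_k, s_k) − Σ_{k=1}^{ℓ−1} D(s_k, r_{k+1}) ≥ 0. -/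

import Mathlib

open Finset

/-- ℓ1 distance in the time-augmented (TA) plane. -/
def taDist (p q : ℝ × ℝ) : ℝ := |p.1 - q.1| + |p.2 - q.2|

/-- Lemma 3.2 (realgeq0): a real augmenting path satisfying the dual invariants
has nonnegative γ-net-cost. -/
theorem realPath_netCost_nonneg (γ : ℝ) (ℓ : ℕ) (hℓ : 1 ≤ ℓ)
    (r s : ℕ → ℝ × ℝ) (y w : ℕ → ℝ)
    (h1 : ∀ k < ℓ, y k + w k ≤ γ * taDist (r k) (s k))
    (h2 : ∀ k, k + 1 < ℓ → w k + y (k + 1) = taDist (s k) (r (k + 1)))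
    (h3 : y 0 = 0) (h4 : w (ℓ - 1) = 0) :
    0 ≤ γ * ∑ k ∈ range ℓ, taDist (r k) (s k)
        - ∑ k ∈ range (ℓ - 1), taDist (s k) (r (k + 1)) := by
  obtain ⟨m, rfl⟩ : ∃ m, ℓ = m + 1 := ⟨ℓ - 1, (Nat.succ_pred_eq_of_pos hℓ).symm⟩
  have key : ∑ k ∈ range (m + 1), (y k + w k)
      ≤ γ * ∑ k ∈ range (m + 1), taDist (r k) (s k) := by
    rw [mul_sum]
    exact Finset.sum_le_sum fun k hk => h1 k (mem_range.mp hk)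
  have e1 : ∑ k ∈ range (m + 1), (y k + w k)
      = y 0 + w m + ∑ k ∈ range m, (w k + y (k + 1)) := by
    rw [sum_add_distrib, sum_add_distrib, Finset.sum_range_succ',
      Finset.sum_range_succ]
    ring
  have e2 : ∑ k ∈ range m, (w k + y (k + 1))
      = ∑ k ∈ range m, taDist (s k) (r (k + 1)) := by
    refine Finset.sum_congr rfl fun k hk => h2 k ?_
    simpa using mem_range.mp hk
  simp only [Nat.add_sub_cancel] at h4 ⊢
  rw [e1, e2, h3, h4] at key
  linarith
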